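/- Let G_ℝ be a topological group acting transitively on a set D, fix o ∈ D, and let K ⊆ G_ℝ be the stabilizer of o. Let Γ ⊆ G_ℝ be a subgroup such that Γ ∩ K is finite. Suppose T, T' ∈ Γ satisfy T^m · o = (T')^m · o for all integers m. Then there exists a positive integer d ≤ |Γ ∩ K| with T^d = (T')^d. -/

import Mathlib

/-- Let `G` be a topological group acting transitively on a set `D`, fix `o ∈ D` with
stabilizer `K`, and let `Γ ≤ G` be a subgroup with `Γ ∩ K` finite.  If `T, T' ∈ Γ` satisfy
`T^m · o = (T')^m · o` for all integers `m`, then `T^d = (T')^d` for some positive integer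
`d ≤ |Γ ∩ K|`. -/
theorem pow_eq_of_pow_smul_eq
    {G : Type*} [Group G] [TopologicalSpace G] [IsTopologicalGroup G]
    {D : Type*} [MulAction G D] [MulAction.IsPretransitive G D]
    (o : D) (Γ : Subgroup G)
    (hfin : Finite ↥(Γ ⊓ MulAction.stabilizer G o))
    (T T' : G) (hT : T ∈ Γ) (hT' : T' ∈ Γ)
    (h : ∀ m : ℤ, T ^ m • o = T' ^ m • o) :
    ∃ d : ℕ, 0 < d ∧ d ≤ Nat.card ↥(Γ ⊓ MulAction.stabilizer G o) ∧ T ^ d = T' ^ d := by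
  set S := Γ ⊓ MulAction.stabilizer G o with hS
  have hmem : ∀ m : ℕ, T' ^ (-(m : ℤ)) * T ^ (m : ℤ) ∈ S := by
    intro m
    refine Subgroup.mem_inf.mpr ⟨?_, ?_⟩
    · exact Γ.mul_mem (Γ.zpow_mem hT' _) (Γ.zpow_mem hT _)
    · show (T' ^ (-(m : ℤ)) * T ^ (m : ℤ)) • o = o
      rw [mul_smul, h m, zpow_neg, inv_smul_smul]
  have hcard : 0 < Nat.card S := Nat.card_pos
  set N := Nat.card S with hN
  have : Fintype S := Fintype.ofFinite S
  have hlt' : Fintype.card S < Fintype.card (Fin (N + 1)) := by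
    simp [hN, Nat.card_eq_fintype_card]
  obtain ⟨i, j, hij, heq⟩ := Fintype.exists_ne_map_eq_of_card_lt
    (fun m : Fin (N + 1) => (⟨T' ^ (-(m : ℤ)) * T ^ (m : ℤ), hmem m⟩ : S)) hlt'
  -- WLOG i < j
  wlog hlt : (i : ℕ) < (j : ℕ) generalizing i j
  · exact this j i hij.symm heq.symm (by have : (i:ℕ) ≠ (j:ℕ) := fun hv => hij (Fin.ext hv); omega)
  have heq' : T' ^ (-(i : ℤ)) * T ^ (i : ℤ) = T' ^ (-(j : ℤ)) * T ^ (j : ℤ) :=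
    congrArg Subtype.val heq
  have key : T' ^ ((j : ℤ) - (i : ℤ)) = T ^ ((j : ℤ) - (i : ℤ)) := by
    have h2 := congrArg (fun x => T' ^ ((j : ℤ)) * x * T ^ (-(i : ℤ))) heq'
    beta_reduce at h2
    rw [zpow_sub, zpow_sub]
    group at h2 ⊢
    exact h2
  refine ⟨(j : ℕ) - (i : ℕ), by omega, by omega, ?_⟩
  rw [← zpow_natCast, ← zpow_natCast T', Nat.cast_sub hlt.le, key]
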